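/- For any connected graph G on n ≥ 3 vertices, the cube G³ (the graph on the same vertex set where u and v are adjacent iff their distance in G is at most 3 and u ≠ v) contains a Hamiltonian cycle. -/

import Mathlib

open SimpleGraph

universe u
variable {W : Type u}

def cube_inducedOut (H : SimpleGraph W) (s : Set W) : H.induce s →g H :=
  ⟨Subtype.val, fun {a b} h => h⟩

lemma cube_dist_induce_le {H : SimpleGraph W} {s : Set W} {a b : ↥s}
    (h : (H.induce s).Reachable a b) : H.dist ↑a ↑b ≤ (H.induce s).dist a b := by
  obtain ⟨p, hp⟩ := h.exists_walk_length_eq_dist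
  calc H.dist ↑a ↑b ≤ (p.map (cube_inducedOut H s)).length := dist_le _
    _ = p.length := Walk.length_map _ _
    _ = _ := hp

lemma cube_reachable_induce {H : SimpleGraph W} {s t : Set W} {a b : ↥s}
    (p : (H.induce s).Walk a b) (hsupp : ∀ c ∈ p.support, (c : W) ∈ t) :
    (H.induce t).Reachable ⟨↑a, hsupp a p.start_mem_support⟩ ⟨↑b, hsupp b p.end_mem_support⟩ := by
  induction p with
  | nil => exact Reachable.refl _
  | @cons a u b h q ih =>
    have hu : (u : W) ∈ t := hsupp u (by simp)
    have hadj : (H.induce t).Adj ⟨↑a, hsupp a (Walk.start_mem_support _)⟩ ⟨↑u, hu⟩ := h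
    exact hadj.reachable.trans (ih fun c hc => hsupp c (by simp [hc]))

lemma cube_exists_adj_frontier {H : SimpleGraph W} {r : W} :
    ∀ {x : W} (_ : H.Walk x r) (hx : x ≠ r), ∃ y, ∃ hy : y ≠ r, H.Adj y r ∧
      (H.induce {z | z ≠ r}).Reachable ⟨x, hx⟩ ⟨y, hy⟩ := by
  intro x p
  induction p with
  | nil => exact fun hx => absurd rfl hx
  | @cons x u r h q ih =>
    intro hx
    by_cases hur : u = r
    · subst hur
      exact ⟨x, hx, h, Reachable.refl _⟩
    · obtain ⟨y, hy, hyr, hreach⟩ := ih hur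
      have hadj : (H.induce {z | z ≠ r}).Adj ⟨x, hx⟩ ⟨u, hur⟩ := h
      exact ⟨y, hy, hyr, hadj.reachable.trans hreach⟩

lemma cube_exists_adj {H : SimpleGraph W} [Fintype W] (hc : H.Connected)
    (h2 : 2 ≤ Fintype.card W) (x : W) : ∃ y, H.Adj x y := by
  obtain ⟨y, hy⟩ := Fintype.exists_ne_of_one_lt_card (by omega) x
  obtain ⟨p⟩ := hc x y
  cases p with
  | nil => exact absurd rfl hy.symm
  | cons h q => exact ⟨_, h⟩

lemma cube_key : ∀ (n : ℕ) {W : Type u} [Fintype W] [DecidableEq W] (H : SimpleGraph W),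
    Fintype.card W ≤ n → H.Connected → ∀ r w : W, (r = w → Fintype.card W ≤ 1) →
    ∃ l : List W, l.Nodup ∧ (∀ x : W, x ∈ l) ∧ l.head? = some r ∧ l.getLast? = some w ∧
      l.Chain' (fun a b => H.dist a b ≤ 3) := by
  intro n
  induction n with
  | zero =>
    intro W _ _ H hn hconn r w _
    have : 0 < Fintype.card W := Fintype.card_pos_iff.mpr hconn.nonempty
    omega
  | succ n ih =>
    intro W _ _ H hn hconn r w h1
    by_cases hcard1 : Fintype.card W ≤ 1
    · haveI hsub : Subsingleton W := Fintype.card_le_one_iff_subsingleton.mp hcard1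
      have hwr : w = r := Subsingleton.elim w r
      exact ⟨[r], by simp, fun x => by simp [Subsingleton.elim x r], by simp,
        by simp [hwr], List.isChain_singleton _⟩
    · have hrw : r ≠ w := fun h => hcard1 (h1 h)
      have hws : w ∈ {z : W | z ≠ r} := hrw.symm
      set K : SimpleGraph ↥{z : W | z ≠ r} := H.induce {z : W | z ≠ r} with hK
      set C : Set W := {z | ∃ h : z ∈ {z : W | z ≠ r}, K.Reachable ⟨z, h⟩ ⟨w, hws⟩} with hC
      have hwC : w ∈ C := ⟨hws, Reachable.refl _⟩
      have hrC : r ∉ C := fun h => h.1 rfl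
      set D : Set W := Cᶜ with hDdef
      have hrD : r ∈ D := hrC
      have hwD : w ∉ D := fun h => h hwC
      -- a vertex of C adjacent to r
      obtain ⟨pwr⟩ := hconn w r
      obtain ⟨c₀, hc₀r, hc₀adj, hc₀reach⟩ := cube_exists_adj_frontier pwr hrw.symm
      have hc₀C : c₀ ∈ C := ⟨hc₀r, hc₀reach.symm⟩
      -- connectivity of the two parts
      have hCconn : (H.induce C).Connected := by
        rw [connected_iff]
        refine ⟨?_, ⟨⟨w, hwC⟩⟩⟩
        have hto : ∀ a : ↥C, (H.induce C).Reachable a ⟨w, hwC⟩ := by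
          rintro ⟨a, ha, hreach⟩
          obtain ⟨p⟩ := hreach
          have hsupp : ∀ c ∈ p.support, (c : W) ∈ C := fun c hc =>
            ⟨c.2, ⟨p.dropUntil c hc⟩⟩
          exact cube_reachable_induce p hsupp
        intro a b; exact (hto a).trans (hto b).symm
      have hDconn : (H.induce D).Connected := by
        rw [connected_iff]
        refine ⟨?_, ⟨⟨r, hrD⟩⟩⟩
        have hto : ∀ a : ↥D, (H.induce D).Reachable a ⟨r, hrD⟩ := by
          rintro ⟨a, haD⟩
          by_cases har : a = r
          · subst har; exact Reachable.refl _
          · obtain ⟨par⟩ := hconn a r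
            obtain ⟨y, hyr, hyadj, hyreach⟩ := cube_exists_adj_frontier par har
            obtain ⟨q⟩ := hyreach
            have hsupp : ∀ c ∈ q.support, (c : W) ∈ D := by
              intro c hc hcC
              exact haD ⟨har, Reachable.trans (⟨q.takeUntil c hc⟩ : K.Reachable ⟨a, har⟩ c) hcC.2⟩
            have h1' := cube_reachable_induce q hsupp
            have hyD : y ∈ D := hsupp _ q.end_mem_support
            have hadj : (H.induce D).Adj ⟨y, hyD⟩ ⟨r, hrD⟩ := hyadj
            exact h1'.trans hadj.reachable
        intro a b; exact (hto a).trans (hto b).symm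
      haveI : Fintype ↥C := Fintype.ofFinite _
      haveI : Fintype ↥D := Fintype.ofFinite _
      have hCcard : Fintype.card ↥C < Fintype.card W :=
        Fintype.card_lt_of_injective_of_notMem _ Subtype.val_injective (b := r)
          (fun ⟨x, hx⟩ => hrC (hx ▸ x.2))
      have hDcard : Fintype.card ↥D < Fintype.card W :=
        Fintype.card_lt_of_injective_of_notMem _ Subtype.val_injective (b := w)
          (fun ⟨x, hx⟩ => hwD (hx ▸ x.2))
      -- the list covering D, from r to a vertex a at distance ≤ 1 from r
      have hDpart : ∃ (a : W) (haD : a ∈ D) (l₁ : List ↥D), H.dist a r ≤ 1 ∧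
          l₁.Nodup ∧ (∀ x : ↥D, x ∈ l₁) ∧ l₁.head? = some ⟨r, hrD⟩ ∧
          l₁.getLast? = some ⟨a, haD⟩ ∧
          l₁.Chain' (fun u v => (H.induce D).dist u v ≤ 3) := by
        by_cases hD1 : Fintype.card ↥D ≤ 1
        · obtain ⟨l₁, h₁, h₂, h₃, h₄, h₅⟩ :=
            ih (H.induce D) (by omega) hDconn ⟨r, hrD⟩ ⟨r, hrD⟩ (fun _ => hD1)
          exact ⟨r, hrD, l₁, by simp [SimpleGraph.dist_self], h₁, h₂, h₃, h₄, h₅⟩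
        · obtain ⟨a', hadj⟩ := cube_exists_adj hDconn (by omega) ⟨r, hrD⟩
          obtain ⟨l₁, h₁, h₂, h₃, h₄, h₅⟩ :=
            ih (H.induce D) (by omega) hDconn ⟨r, hrD⟩ a'
              (fun h => absurd h (Adj.ne hadj))
          have hHadj : H.Adj r ↑a' := hadj
          refine ⟨↑a', a'.2, l₁, ?_, h₁, h₂, h₃, h₄, h₅⟩
          rw [SimpleGraph.dist_comm]
          exact le_of_eq (dist_eq_one_iff_adj.mpr hHadj)
      -- the list covering C, from a vertex b at distance ≤ 2 from r, to w
      have hCpart : ∃ (b : W) (hbC : b ∈ C) (l₂ : List ↥C), H.dist r b ≤ 2 ∧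
          l₂.Nodup ∧ (∀ x : ↥C, x ∈ l₂) ∧ l₂.head? = some ⟨b, hbC⟩ ∧
          l₂.getLast? = some ⟨w, hwC⟩ ∧
          l₂.Chain' (fun u v => (H.induce C).dist u v ≤ 3) := by
        have hrc₀ : H.dist r c₀ = 1 := dist_eq_one_iff_adj.mpr hc₀adj.symm
        by_cases hC1 : Fintype.card ↥C ≤ 1
        · obtain ⟨l₂, h₁, h₂, h₃, h₄, h₅⟩ :=
            ih (H.induce C) (by omega) hCconn ⟨w, hwC⟩ ⟨w, hwC⟩ (fun _ => hC1)
          haveI : Subsingleton ↥C := Fintype.card_le_one_iff_subsingleton.mp hC1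
          have hc₀w : c₀ = w := congrArg Subtype.val
            (Subsingleton.elim (⟨c₀, hc₀C⟩ : ↥C) ⟨w, hwC⟩)
          exact ⟨w, hwC, l₂, by rw [← hc₀w]; omega, h₁, h₂, h₃, h₄, h₅⟩
        · by_cases hex : ∃ c, ∃ _ : c ∈ C, H.Adj r c ∧ c ≠ w
          · obtain ⟨c, hcC, hcadj, hcw⟩ := hex
            obtain ⟨l₂, h₁, h₂, h₃, h₄, h₅⟩ :=
              ih (H.induce C) (by omega) hCconn ⟨c, hcC⟩ ⟨w, hwC⟩
                (fun h => absurd (congrArg Subtype.val h) hcw)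
            refine ⟨c, hcC, l₂, ?_, h₁, h₂, h₃, h₄, h₅⟩
            have := dist_eq_one_iff_adj.mpr hcadj
            omega
          · push_neg at hex
            have hc₀w : c₀ = w := hex c₀ hc₀C hc₀adj.symm
            obtain ⟨b', hb'adj⟩ := cube_exists_adj hCconn (by omega) ⟨w, hwC⟩
            obtain ⟨l₂, h₁, h₂, h₃, h₄, h₅⟩ :=
              ih (H.induce C) (by omega) hCconn b' ⟨w, hwC⟩
                (fun h => absurd h.symm (Adj.ne hb'adj))
            have hHadj : H.Adj w ↑b' := hb'adj
            refine ⟨↑b', b'.2, l₂, ?_, h₁, h₂, h₃, h₄, h₅⟩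
            have h2 : H.dist w ↑b' = 1 := dist_eq_one_iff_adj.mpr hHadj
            have h3 : H.dist r w = 1 := by rw [← hc₀w]; exact hrc₀
            have := hconn.dist_triangle (u := r) (v := w) (w := (b' : W))
            omega
      obtain ⟨a, haD, l₁, hdistar, hl₁nd, hl₁all, hl₁h, hl₁l, hl₁ch⟩ := hDpart
      obtain ⟨b, hbC, l₂, hdistrb, hl₂nd, hl₂all, hl₂h, hl₂l, hl₂ch⟩ := hCpart
      have hl₁ne : l₁ ≠ [] := by intro h; rw [h] at hl₁h; simp at hl₁h
      have hl₂ne : l₂ ≠ [] := by intro h; rw [h] at hl₂h; simp at hl₂h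
      refine ⟨l₁.map Subtype.val ++ l₂.map Subtype.val, ?_, ?_, ?_, ?_, ?_⟩
      · refine List.Nodup.append (hl₁nd.map Subtype.val_injective)
          (hl₂nd.map Subtype.val_injective) ?_
        intro x hx₁ hx₂
        obtain ⟨⟨x₁, hx₁D⟩, _, rfl⟩ := List.mem_map.mp hx₁
        obtain ⟨⟨x₂, hx₂C⟩, _, hx₂eq⟩ := List.mem_map.mp hx₂
        obtain rfl : x₂ = x₁ := hx₂eq
        exact hx₁D hx₂C
      · intro x
        by_cases hx : x ∈ C
        · exact List.mem_append.mpr (Or.inr (List.mem_map.mpr ⟨⟨x, hx⟩, hl₂all _, rfl⟩))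
        · exact List.mem_append.mpr (Or.inl (List.mem_map.mpr ⟨⟨x, hx⟩, hl₁all _, rfl⟩))
      · rw [List.head?_append_of_ne_nil _ (fun h => hl₁ne (List.eq_nil_of_length_eq_zero (by simpa using congrArg List.length h))), List.head?_map, hl₁h]
        rfl
      · rw [List.getLast?_append_of_ne_nil _ (fun h => hl₂ne (List.eq_nil_of_length_eq_zero (by simpa using congrArg List.length h))), List.getLast?_map, hl₂l]
        rfl
      · refine List.IsChain.append ?_ ?_ ?_
        · rw [List.isChain_map]
          exact hl₁ch.imp fun {u v} h =>
            le_trans (cube_dist_induce_le (hDconn.preconnected u v)) h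
        · rw [List.isChain_map]
          exact hl₂ch.imp fun {u v} h =>
            le_trans (cube_dist_induce_le (hCconn.preconnected u v)) h
        · intro x hx y hy
          rw [List.getLast?_map, hl₁l] at hx
          rw [List.head?_map, hl₂h] at hy
          simp only [Option.map_some, Option.mem_def, Option.some_inj] at hx hy
          subst hx; subst hy
          have := hconn.dist_triangle (u := a) (v := r) (w := b)
          omega

lemma cube_chain'_and_ne {R : W → W → Prop} :
    ∀ {l : List W}, l.Nodup → l.Chain' R → l.Chain' (fun a b => a ≠ b ∧ R a b)
  | [], _, _ => List.isChain_nil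
  | [a], _, _ => List.isChain_singleton a
  | a :: b :: l, hnd, hch => by
    change List.IsChain R (a :: b :: l) at hch
    change List.IsChain _ (a :: b :: l)
    rw [List.isChain_cons_cons] at hch ⊢
    rw [List.nodup_cons] at hnd
    exact ⟨⟨fun h => hnd.1 (h ▸ List.mem_cons_self), hch.1⟩,
      cube_chain'_and_ne hnd.2 hch.2⟩

def cube_mkWalk (G' : SimpleGraph W) :
    ∀ (a : W) (l : List W), List.Chain G'.Adj a l →
      G'.Walk a ((a :: l).getLast (List.cons_ne_nil a l))
  | _, [], _ => Walk.nil
  | a, b :: l, h =>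
    Walk.cons (List.rel_of_chain_cons h) (cube_mkWalk G' b l (List.chain_of_chain_cons h))

lemma cube_mkWalk_support (G' : SimpleGraph W) :
    ∀ (a : W) (l : List W) (h : List.Chain G'.Adj a l),
      (cube_mkWalk G' a l h).support = a :: l
  | _, [], _ => rfl
  | a, b :: l, h => by
    rw [cube_mkWalk]; exact congrArg (a :: ·) (cube_mkWalk_support G' b l _)

lemma cube_first_edge {G' : SimpleGraph W} :
    ∀ {u v x : W} (p : G'.Walk u v), p.support.Nodup → s(x, u) ∈ p.edges →
      p.support.tail.head? = some x := by
  intro u v x p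
  induction p with
  | nil => simp
  | @cons u y v h q ih =>
    intro hnd he
    rw [Walk.edges_cons, List.mem_cons] at he
    cases he with
    | inl h' =>
      rw [Sym2.eq_iff] at h'
      obtain ⟨rfl, rfl⟩ | ⟨rfl, -⟩ := h'
      · exact absurd rfl h.ne
      · rw [Walk.support_cons, List.tail_cons, q.support_eq_cons]
        rfl
    | inr h' =>
      exfalso
      rw [Walk.support_cons, List.nodup_cons] at hnd
      exact hnd.1 (q.snd_mem_support_of_mem_edges h')

/-- For any connected graph `G` on `n ≥ 3` vertices, the cube `G³` (vertices
`u ≠ v` adjacent iff their distance in `G` is at most `3`) contains a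
Hamiltonian cycle. -/
theorem stmt8 {V : Type*} [Fintype V] [DecidableEq V] (G : SimpleGraph V)
    (hconn : G.Connected) (hcard : 3 ≤ Fintype.card V) :
    ∃ (a : V) (p : (SimpleGraph.mk (fun u v => u ≠ v ∧ G.dist u v ≤ 3)
        ⟨fun u v h => ⟨h.1.symm, by rw [SimpleGraph.dist_comm]; exact h.2⟩⟩
        ⟨fun u h => h.1 rfl⟩).Walk a a),
      p.IsHamiltonianCycle := by
  set G3 : SimpleGraph V := SimpleGraph.mk (fun u v => u ≠ v ∧ G.dist u v ≤ 3)
      ⟨fun u v h => ⟨h.1.symm, by rw [SimpleGraph.dist_comm]; exact h.2⟩⟩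
      ⟨fun u h => h.1 rfl⟩ with hG3def
  obtain ⟨r₀⟩ := hconn.nonempty
  obtain ⟨w₀, hadj⟩ := cube_exists_adj hconn (by omega) r₀
  obtain ⟨l, hnd, hall, hh, hlst, hch⟩ := cube_key (Fintype.card V) G le_rfl hconn r₀ w₀
    (fun h => absurd h hadj.ne)
  have hch2 := cube_chain'_and_ne hnd hch
  have hlen : 3 ≤ l.length := by
    have h1 : (Finset.univ : Finset V).card ≤ l.toFinset.card :=
      Finset.card_le_card (fun x _ => List.mem_toFinset.mpr (hall x))
    have h2 : l.toFinset.card ≤ l.length := l.toFinset_card_le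
    rw [Finset.card_univ] at h1
    omega
  cases l with
  | nil => simp at hh
  | cons x t =>
  have hx : x = r₀ := by simpa using hh
  subst hx
  have hchain : List.Chain G3.Adj x t := hch2
  have hgl : (x :: t).getLast (List.cons_ne_nil _ _) = w₀ := by
    have h := List.getLast?_eq_getLast (l := x :: t) (List.cons_ne_nil _ _)
    rw [hlst] at h
    exact (Option.some_inj.mp h).symm
  set q : G3.Walk x w₀ := (cube_mkWalk G3 x t hchain).copy rfl hgl with hqdef
  have hqsupp : q.support = x :: t := by
    rw [hqdef, Walk.support_copy, cube_mkWalk_support]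
  have hqpath : q.IsPath := Walk.IsPath.mk' (by rw [hqsupp]; exact hnd)
  have hG3a : G3.Adj w₀ x := by
    refine ⟨hadj.ne', ?_⟩
    rw [SimpleGraph.dist_comm]
    have := dist_eq_one_iff_adj.mpr hadj
    omega
  have hnotedge : s(w₀, x) ∉ q.edges := by
    intro hmem
    have hfe := cube_first_edge q (by rw [hqsupp]; exact hnd) hmem
    rw [hqsupp, List.tail_cons] at hfe
    cases t with
    | nil => simp at hlen
    | cons y t' =>
      have hy : y = w₀ := by simpa using hfe
      rw [← hy] at hlst
      cases t' with
      | nil => simp at hlen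
      | cons z t'' =>
        have hmem' : y ∈ (z :: t'') := by
          rw [List.getLast?_cons_cons, List.getLast?_cons_cons] at hlst
          exact List.mem_of_getLast? hlst
        simp only [List.nodup_cons, List.mem_cons] at hnd
        exact hnd.2.1 (List.mem_cons.mp hmem')
  refine ⟨w₀, Walk.cons hG3a q, (Walk.cons_isCycle_iff q hG3a).mpr ⟨hqpath, hnotedge⟩, ?_⟩
  intro x
  rw [Walk.support_tail_of_not_nil _ Walk.not_nil_cons, Walk.support_cons, List.tail_cons]
  rw [hqsupp]
  exact List.count_eq_one_of_mem hnd (hall x)
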